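/- If X is a topological space, then for every k the singular homology module H_k(X × [-1,1], X × {-1,1}; R) is isomorphic to H_{k-1}(X; R). -/

import Mathlib

/-! Basic framework: pairs of topological spaces, maps of pairs, homotopies of
maps of pairs, and Eilenberg–Steenrod homology theories. -/

/-- A pair `(X, A)` consisting of a topological space and a subset. -/
structure TopPair' where
  carrier : Type
  [topinst : TopologicalSpace carrier]
  sub : Set carrier

attribute [instance] TopPair'.topinst

/-- The pair `(X, A)`. -/
def TopPair'.of (X : Type) [TopologicalSpace X] (A : Set X) : TopPair' :=
  { carrier := X, sub := A }

/-- The pair `(X, ∅)`. -/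
def TopPair'.plain (X : Type) [TopologicalSpace X] : TopPair' :=
  { carrier := X, sub := (∅ : Set X) }

/-- A continuous map of pairs. -/
structure PairMap (P Q : TopPair') where
  toFun : P.carrier → Q.carrier
  continuous : Continuous toFun
  mapsTo : Set.MapsTo toFun P.sub Q.sub

/-- The identity map of pairs. -/
def PairMap.id (P : TopPair') : PairMap P P :=
  ⟨_root_.id, continuous_id, fun _ h => h⟩

/-- Composition of maps of pairs. -/
def PairMap.comp {P Q S : TopPair'} (g : PairMap Q S) (f : PairMap P Q) : PairMap P S :=
  ⟨g.toFun ∘ f.toFun, g.continuous.comp f.continuous, g.mapsTo.comp f.mapsTo⟩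

/-- The inclusion `(A, ∅) → (X, ∅)` of the subspace of a pair. -/
def TopPair'.subIncl (P : TopPair') : PairMap (TopPair'.plain ↥P.sub) (TopPair'.plain P.carrier) :=
  ⟨Subtype.val, continuous_subtype_val, fun _ h => h.elim⟩

/-- The inclusion `(X, ∅) → (X, A)`. -/
def TopPair'.totalIncl (P : TopPair') : PairMap (TopPair'.plain P.carrier) P :=
  ⟨_root_.id, continuous_id, fun _ h => h.elim⟩

/-- Restriction of a map of pairs to the subspaces. -/
def PairMap.subRestrict {P Q : TopPair'} (f : PairMap P Q) :
    PairMap (TopPair'.plain ↥P.sub) (TopPair'.plain ↥Q.sub) :=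
  ⟨fun x => ⟨f.toFun x.1, f.mapsTo x.2⟩,
    (f.continuous.comp continuous_subtype_val).subtype_mk _, fun _ h => h.elim⟩

/-- The pair `(X ∖ U, A ∖ U)` obtained by excising `U` from the pair `P = (X, A)`. -/
def TopPair'.excise (P : TopPair') (U : Set P.carrier) : TopPair' :=
  { carrier := ↥(Uᶜ), sub := Subtype.val ⁻¹' P.sub }

/-- The inclusion `(X ∖ U, A ∖ U) → (X, A)`. -/
def TopPair'.excisionMap (P : TopPair') (U : Set P.carrier) : PairMap (P.excise U) P :=
  ⟨Subtype.val, continuous_subtype_val, fun _ h => h⟩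

/-- Homotopy of maps of pairs. -/
def PairHomotopic {P Q : TopPair'} (f g : PairMap P Q) : Prop :=
  ∃ F : P.carrier × ℝ → Q.carrier, Continuous F ∧
    (∀ x, F (x, 0) = f.toFun x) ∧ (∀ x, F (x, 1) = g.toFun x) ∧
    ∀ x ∈ P.sub, ∀ t : ℝ, F (x, t) ∈ Q.sub

/-- An (ordinary, singular-homology-like) homology theory with coefficients in `R`:
a functor on pairs of topological spaces satisfying the Eilenberg–Steenrod axioms
(homotopy invariance, exactness of the long exact sequence of a pair, excision and
the dimension axiom, with coefficients `H₀(pt) ≅ R`).  Singular homology with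
coefficients in `R` is such a theory. -/
structure HomologyTheory (R : Type) [CommRing R] where
  H : ℤ → TopPair' → Type
  [instAddCommGroup : ∀ k P, AddCommGroup (H k P)]
  [instModule : ∀ k P, Module R (H k P)]
  map : ∀ {P Q : TopPair'}, PairMap P Q → ∀ k : ℤ, H k P →ₗ[R] H k Q
  map_id : ∀ (P : TopPair') (k : ℤ), map (PairMap.id P) k = LinearMap.id
  map_comp : ∀ {P Q S : TopPair'} (f : PairMap P Q) (g : PairMap Q S) (k : ℤ),
    map (g.comp f) k = (map g k).comp (map f k)
  homotopy_invariance : ∀ {P Q : TopPair'} (f g : PairMap P Q),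
    PairHomotopic f g → ∀ k, map f k = map g k
  boundary : ∀ (P : TopPair') (k : ℤ), H k P →ₗ[R] H (k - 1) (TopPair'.plain ↥P.sub)
  boundary_natural : ∀ {P Q : TopPair'} (f : PairMap P Q) (k : ℤ),
    (boundary Q k).comp (map f k) = (map f.subRestrict (k - 1)).comp (boundary P k)
  exact_sub_total : ∀ (P : TopPair') (k : ℤ),
    Function.Exact (map P.subIncl k) (map P.totalIncl k)
  exact_total_pair : ∀ (P : TopPair') (k : ℤ),
    Function.Exact (map P.totalIncl k) (boundary P k)
  exact_pair_sub : ∀ (P : TopPair') (k : ℤ),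
    Function.Exact (boundary P k) (map P.subIncl (k - 1))
  excision : ∀ (P : TopPair') (U : Set P.carrier), closure U ⊆ interior P.sub →
    ∀ k, Function.Bijective (map (P.excisionMap U) k)
  dimension : ∀ k : ℤ, k ≠ 0 → Subsingleton (H k (TopPair'.plain PUnit))
  dim_coeff : Nonempty (H 0 (TopPair'.plain PUnit) ≃ₗ[R] R)

attribute [instance] HomologyTheory.instAddCommGroup HomologyTheory.instModule

/-! ### Auxiliary material for the proof -/

theorem PairMap.ext' {P Q : TopPair'} {f g : PairMap P Q} (h : f.toFun = g.toFun) : f = g := by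
  cases f; cases g; cases h; rfl

namespace CylProof

variable (X : Type) [TopologicalSpace X]

noncomputable section

abbrev II : Set ℝ := Set.Icc (-1 : ℝ) 1

lemma hle : (-1 : ℝ) ≤ 1 := by norm_num

abbrev Cyl := X × ↥(II)

def S : Set (Cyl X) := {p : Cyl X | (p.2 : ℝ) = -1 ∨ (p.2 : ℝ) = 1}

abbrev A := ↥(S X)

def P : TopPair' := TopPair'.of (Cyl X) (S X)

def B : Set (A X) := {a : A X | ((a : Cyl X).2 : ℝ) = -1}

def Q : TopPair' := TopPair'.of (A X) (B X)

/-- projection of the cylinder to `X` -/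
def pX : PairMap (TopPair'.plain (Cyl X)) (TopPair'.plain X) :=
  ⟨Prod.fst, continuous_fst, fun _ h => h.elim⟩

def topPt (x : X) : A X := ⟨(x, ⟨1, by norm_num⟩), Or.inr rfl⟩
def botPt (x : X) : A X := ⟨(x, ⟨-1, by norm_num⟩), Or.inl rfl⟩

lemma cont_topPt : Continuous (topPt X) :=
  ((continuous_id.prodMk continuous_const)).subtype_mk _

lemma cont_botPt : Continuous (botPt X) :=
  ((continuous_id.prodMk continuous_const)).subtype_mk _

def ιtop : PairMap (TopPair'.plain X) (TopPair'.plain (A X)) :=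
  ⟨topPt X, cont_topPt X, fun _ h => h.elim⟩

def ιbot : PairMap (TopPair'.plain X) (TopPair'.plain (A X)) :=
  ⟨botPt X, cont_botPt X, fun _ h => h.elim⟩

/-- top inclusion `X → X × I` -/
def σtop : PairMap (TopPair'.plain X) (TopPair'.plain (Cyl X)) := (P X).subIncl.comp (ιtop X)
/-- bottom inclusion `X → X × I` -/
def σbot : PairMap (TopPair'.plain X) (TopPair'.plain (Cyl X)) := (P X).subIncl.comp (ιbot X)

lemma pX_σtop : (pX X).comp (σtop X) = PairMap.id _ := PairMap.ext' rfl
lemma pX_σbot : (pX X).comp (σbot X) = PairMap.id _ := PairMap.ext' rfl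

/-- The homotopy collapsing the cylinder onto its top. -/
lemma htpy_collapse : PairHomotopic ((σtop X).comp (pX X)) (PairMap.id (TopPair'.plain (Cyl X))) := by
  refine ⟨fun q => (q.1.1, Set.projIcc (-1) 1 hle ((1 - q.2) + q.2 * (q.1.2 : ℝ))), ?_, ?_, ?_, ?_⟩
  · apply Continuous.prodMk (continuous_fst.fst)
    exact continuous_projIcc.comp (by fun_prop)
  · intro x
    refine Prod.ext rfl ?_
    simp [Set.projIcc_of_mem hle (by norm_num : (1:ℝ) ∈ II)]
    rfl
  · intro x
    refine Prod.ext rfl ?_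
    simp only [one_mul, sub_self, zero_add]
    exact (Set.projIcc_of_mem hle x.2.2).trans rfl
  · intro x hx; exact hx.elim

/-- The homotopy between bottom and top inclusions. -/
lemma htpy_botTop : PairHomotopic (σbot X) (σtop X) := by
  refine ⟨fun q => (q.1, Set.projIcc (-1) 1 hle (2 * q.2 - 1)), ?_, ?_, ?_, ?_⟩
  · exact Continuous.prodMk continuous_fst (continuous_projIcc.comp (by fun_prop))
  · intro x
    refine Prod.ext rfl (Subtype.ext ?_)
    show (Set.projIcc (-1) 1 hle (2 * 0 - 1) : ℝ) = -1
    norm_num [Set.projIcc]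
  · intro x
    refine Prod.ext rfl (Subtype.ext ?_)
    show (Set.projIcc (-1) 1 hle (2 * 1 - 1) : ℝ) = 1
    norm_num [Set.projIcc]
  · intro x hx; exact hx.elim

lemma B_isOpen : IsOpen (B X) := by
  have : B X = (fun a : A X => ((a : Cyl X).2 : ℝ)) ⁻¹' (Set.Iio 0) := by
    ext a
    rcases a.2 with h | h <;> simp [B, Set.mem_preimage, h] <;> norm_num
  rw [this]
  exact IsOpen.preimage (by fun_prop) isOpen_Iio

lemma B_isClosed : IsClosed (B X) := by
  have : B X = (fun a : A X => ((a : Cyl X).2 : ℝ)) ⁻¹' {-1} := rfl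
  rw [this]
  exact IsClosed.preimage (by fun_prop) isClosed_singleton

lemma B_excisable : closure (B X) ⊆ interior (Q X).sub := by
  rw [(B_isClosed X).closure_eq]
  show B X ⊆ interior (B X)
  rw [(B_isOpen X).interior_eq]

/-- the excised pair: the top of the cylinder boundary -/
def E : TopPair' := (Q X).excise (B X)

def ρ : PairMap (E X) (TopPair'.plain X) :=
  ⟨fun e => e.val.val.1, by fun_prop, fun a ha => absurd ha a.2⟩

omit [TopologicalSpace X] in
lemma topPt_not_mem_B (x : X) : topPt X x ∈ (B X)ᶜ := fun h => by
  have h1 : (1 : ℝ) = -1 := h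
  norm_num at h1

def τ : PairMap (TopPair'.plain X) (E X) :=
  ⟨fun x => ⟨topPt X x, topPt_not_mem_B X x⟩,
    (cont_topPt X).subtype_mk _, fun _ h => h.elim⟩

lemma ρ_τ : (ρ X).comp (τ X) = PairMap.id _ := PairMap.ext' (funext fun _ => rfl)

lemma τ_ρ : (τ X).comp (ρ X) = PairMap.id _ := by
  apply PairMap.ext'
  funext e
  refine Subtype.ext (Subtype.ext (Prod.ext rfl (Subtype.ext ?_)))
  rcases e.val.2 with h | h
  · exact absurd h e.2
  · exact h.symm

/-- homeomorphism between `X` and the bottom -/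
def ιbot' : PairMap (TopPair'.plain X) (TopPair'.plain ↥(B X)) :=
  ⟨fun x => ⟨botPt X x, rfl⟩, (cont_botPt X).subtype_mk _, fun _ h => h.elim⟩

def β : PairMap (TopPair'.plain ↥(B X)) (TopPair'.plain X) :=
  ⟨fun b => (b.1 : Cyl X).1, by fun_prop, fun _ h => h.elim⟩

lemma β_ιbot' : (β X).comp (ιbot' X) = PairMap.id _ := PairMap.ext' rfl

lemma ιbot'_β : (ιbot' X).comp (β X) = PairMap.id _ := by
  apply PairMap.ext'
  funext b
  exact Subtype.ext (Subtype.ext (Prod.ext rfl (Subtype.ext b.2.symm)))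

lemma sub_ιbot' : ((Q X).subIncl).comp (ιbot' X) = ιbot X := PairMap.ext' rfl

lemma exc_τ : ((Q X).excisionMap (B X)).comp (τ X) = (Q X).totalIncl.comp (ιtop X) :=
  PairMap.ext' rfl


lemma σtop_def : (P X).subIncl.comp (ιtop X) = σtop X := rfl
lemma σbot_def : (P X).subIncl.comp (ιbot X) = σbot X := rfl

lemma ιbot_β : (ιbot X).comp (β X) = (Q X).subIncl := by
  apply PairMap.ext'
  funext b
  exact Subtype.ext (Prod.ext rfl (Subtype.ext b.2.symm))

end

end CylProof

/-- For any topological space `X`, any commutative ring `R` and any `k`,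
the singular homology module `H_k(X × [-1,1], X × {-1,1}; R)` is isomorphic to
`H_{k-1}(X; R)`.  (Quantified over all homology theories satisfying the
Eilenberg–Steenrod axioms; singular homology with coefficients in `R` is one.) -/
theorem homology_of_cylinder_mod_ends (R : Type) [CommRing R] (T : HomologyTheory R)
    (X : Type) [TopologicalSpace X] (k : ℤ) :
    Nonempty
      (T.H k (TopPair'.of (X × ↥(Set.Icc (-1 : ℝ) 1))
          {p : X × ↥(Set.Icc (-1 : ℝ) 1) | (p.2 : ℝ) = -1 ∨ (p.2 : ℝ) = 1})
        ≃ₗ[R] T.H (k - 1) (TopPair'.plain X)) := by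
  show Nonempty (T.H k (CylProof.P X) ≃ₗ[R] T.H (k - 1) (TopPair'.plain X))
  open CylProof in
  have map_map : ∀ {P Q S : TopPair'} (f : PairMap P Q) (g : PairMap Q S) (m : ℤ)
      (y : T.H m P), T.map g m (T.map f m y) = T.map (g.comp f) m y :=
    fun f g m y => (LinearMap.congr_fun (T.map_comp f g m) y).symm
  open CylProof in
  have map_id' : ∀ (P : TopPair') (m : ℤ) (y : T.H m P), T.map (PairMap.id P) m y = y :=
    fun P m y => by rw [T.map_id]; rfl
  open CylProof in
  -- `σtop` induces a surjection on homology (it is a homotopy equivalence)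
  have hστ_surj : Function.Surjective (T.map (σtop X) k) := by
    intro y
    refine ⟨T.map (pX X) k y, ?_⟩
    rw [map_map, T.homotopy_invariance _ _ (htpy_collapse X), map_id']
  -- hence the inclusion of the boundary is surjective on homology at level k
  have hsub_surj : Function.Surjective (T.map (P X).subIncl k) := by
    intro y
    obtain ⟨x, hx⟩ := hστ_surj y
    exact ⟨T.map (ιtop X) k x, (map_map (ιtop X) ((P X).subIncl) k x).trans hx⟩
  -- the total inclusion induces the zero map at level k
  have htot0 : ∀ y, T.map (P X).totalIncl k y = 0 := fun y =>
    (T.exact_sub_total (P X) k y).mpr (hsub_surj y)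
  -- the boundary map at level k is injective
  have hbd_inj : Function.Injective (T.boundary (P X) k) := by
    rw [injective_iff_map_eq_zero]
    intro a ha
    obtain ⟨x, hx⟩ := (T.exact_total_pair (P X) k a).mp ha
    rw [← hx, htot0]
  -- range of the boundary is the kernel of the boundary inclusion at level k-1
  have hrange : LinearMap.range (T.boundary (P X) k)
      = LinearMap.ker (T.map (P X).subIncl (k - 1)) :=
    (LinearMap.exact_iff.mp (T.exact_pair_sub (P X) k)).symm
  -- the difference map d = (top)_* - (bot)_*
  set d : T.H (k - 1) (TopPair'.plain X) →ₗ[R] T.H (k - 1) (TopPair'.plain (A X)) :=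
    T.map (ιtop X) (k - 1) - T.map (ιbot X) (k - 1) with hd
  have hsub_d : ∀ x, T.map (P X).subIncl (k - 1) (d x) = 0 := by
    intro x
    have hdx : d x = T.map (ιtop X) (k - 1) x - T.map (ιbot X) (k - 1) x := rfl
    rw [hdx]
    refine (map_sub (T.map (P X).subIncl (k - 1)) _ _).trans (sub_eq_zero.mpr ?_)
    exact (map_map (ιtop X) ((P X).subIncl) (k - 1) x).trans
      ((LinearMap.congr_fun (T.homotopy_invariance _ _ (htpy_botTop X) (k - 1)) x).symm.trans
        (map_map (ιbot X) ((P X).subIncl) (k - 1) x).symm)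
  -- the excision equivalence
  let exE : T.H (k - 1) (E X) ≃ₗ[R] T.H (k - 1) (Q X) :=
    LinearEquiv.ofBijective _ (T.excision (Q X) (B X) (B_excisable X) (k - 1))
  -- the projection onto the "top" factor of the homology of the boundary
  let π : T.H (k - 1) (TopPair'.plain (A X)) →ₗ[R] T.H (k - 1) (TopPair'.plain X) :=
    (T.map (ρ X) (k - 1)) ∘ₗ (exE.symm : T.H (k - 1) (Q X) →ₗ[R] T.H (k - 1) (E X))
      ∘ₗ (T.map (Q X).totalIncl (k - 1))
  have hqtop : ∀ x, T.map ((Q X).totalIncl) (k - 1) (T.map (ιtop X) (k - 1) x)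
      = exE (T.map (τ X) (k - 1) x) := by
    intro x
    show _ = T.map ((Q X).excisionMap (B X)) (k - 1) (T.map (τ X) (k - 1) x)
    have e3 : T.map (((Q X).excisionMap (B X)).comp (τ X)) (k - 1) x
        = T.map ((Q X).totalIncl.comp (ιtop X)) (k - 1) x := by rw [exc_τ X]
    exact (map_map (ιtop X) ((Q X).totalIncl) (k - 1) x).trans
      (e3.symm.trans (map_map (τ X) ((Q X).excisionMap (B X)) (k - 1) x).symm)
  have hπtop : ∀ x, π (T.map (ιtop X) (k - 1) x) = x := by
    intro x
    show T.map (ρ X) (k - 1)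
      (exE.symm (T.map ((Q X).totalIncl) (k - 1) (T.map (ιtop X) (k - 1) x))) = x
    rw [hqtop, exE.symm_apply_apply]
    refine (map_map (τ X) (ρ X) (k - 1) x).trans ?_
    rw [ρ_τ X]
    exact map_id' _ _ _
  have hπbot : ∀ x, π (T.map (ιbot X) (k - 1) x) = 0 := by
    intro x
    show T.map (ρ X) (k - 1)
      (exE.symm (T.map ((Q X).totalIncl) (k - 1) (T.map (ιbot X) (k - 1) x))) = 0
    have h1 : T.map ((Q X).totalIncl) (k - 1) (T.map (ιbot X) (k - 1) x) = 0 := by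
      have h2 : T.map (ιbot X) (k - 1) x
          = T.map ((Q X).subIncl) (k - 1) (T.map (ιbot' X) (k - 1) x) := by
        refine ((map_map (ιbot' X) ((Q X).subIncl) (k - 1) x).trans ?_).symm
        exact congrArg (fun f => T.map f (k - 1) x) (sub_ιbot' X)
      rw [h2]
      exact (T.exact_sub_total (Q X) (k - 1)).apply_apply_eq_zero _
    rw [h1, map_zero, map_zero]
  have hπd : ∀ x, π (d x) = x := by
    intro x
    have hdx : d x = T.map (ιtop X) (k - 1) x - T.map (ιbot X) (k - 1) x := rfl
    rw [hdx, map_sub, hπtop, hπbot, sub_zero]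
  have hρinj : ∀ z : T.H (k - 1) (E X), T.map (ρ X) (k - 1) z = 0 → z = 0 := by
    intro z hz
    have h1 : T.map (τ X) (k - 1) (T.map (ρ X) (k - 1) z) = z := by
      refine (map_map (ρ X) (τ X) (k - 1) z).trans ?_
      rw [τ_ρ X]
      exact map_id' _ _ _
    rw [← h1, hz, map_zero]
  have hσbinj : ∀ x, T.map (σbot X) (k - 1) x = 0 → x = 0 := by
    intro x hx
    have h1 : T.map (pX X) (k - 1) (T.map (σbot X) (k - 1) x) = x := by
      refine (map_map (σbot X) (pX X) (k - 1) x).trans ?_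
      rw [pX_σbot X]
      exact map_id' _ _ _
    rw [← h1, hx, map_zero]
  -- every kernel element of the level-(k-1) inclusion is in the image of d
  have hd_ker : ∀ a : T.H (k - 1) (TopPair'.plain (A X)),
      T.map (P X).subIncl (k - 1) a = 0 → ∃ x, d x = a := by
    intro a ha
    refine ⟨π a, ?_⟩
    set b := a - d (π a) with hb
    have hπb : π b = 0 := by rw [hb, map_sub, hπd, sub_self]
    have hib : T.map (P X).subIncl (k - 1) b = 0 := by
      rw [hb]
      refine (map_sub (T.map (P X).subIncl (k - 1)) _ _).trans ?_
      rw [ha, hsub_d, sub_zero]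
    have hqb : T.map ((Q X).totalIncl) (k - 1) b = 0 := by
      have h2 : exE.symm (T.map ((Q X).totalIncl) (k - 1) b) = 0 := hρinj _ hπb
      have h3 := (exE.symm_apply_eq).mp h2
      rw [map_zero] at h3
      exact h3
    obtain ⟨c, hc⟩ := (T.exact_sub_total (Q X) (k - 1) b).mp hqb
    have hc' : b = T.map (ιbot X) (k - 1) (T.map (β X) (k - 1) c) := by
      have e4 : T.map ((ιbot X).comp (β X)) (k - 1) c = b := by
        rw [ιbot_β X]; exact hc
      exact ((map_map (β X) (ιbot X) (k - 1) c).trans e4).symm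
    have h0 : T.map (β X) (k - 1) c = 0 := by
      apply hσbinj
      have h4 : T.map (σbot X) (k - 1) (T.map (β X) (k - 1) c)
          = T.map (P X).subIncl (k - 1)
              (T.map (ιbot X) (k - 1) (T.map (β X) (k - 1) c)) :=
        (map_map _ _ _ _).symm
      rw [h4, ← hc']
      exact hib
    have hb0 : b = 0 := by rw [hc', h0, map_zero]
    have h5 : a - d (π a) = 0 := by rw [← hb]; exact hb0
    exact (eq_of_sub_eq_zero h5).symm
  -- d corestricted to the kernel is bijective
  have hdmem : ∀ x, d x ∈ LinearMap.ker (T.map (P X).subIncl (k - 1)) := fun x =>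
    (LinearMap.mem_ker (f := T.map (P X).subIncl (k - 1))).mpr (hsub_d x)
  let d' : T.H (k - 1) (TopPair'.plain X) →ₗ[R]
      LinearMap.ker (T.map (P X).subIncl (k - 1)) :=
    LinearMap.codRestrict _ d hdmem
  have hd'bij : Function.Bijective d' := by
    constructor
    · intro x y hxy
      have hxy' : d x = d y := congrArg Subtype.val hxy
      rw [← hπd x, ← hπd y, hxy']
    · rintro ⟨a, ha⟩
      obtain ⟨x, hx⟩ := hd_ker a (LinearMap.mem_ker.mp ha)
      exact ⟨x, Subtype.ext hx⟩
  exact ⟨((LinearEquiv.ofInjective _ hbd_inj).trans (LinearEquiv.ofEq _ _ hrange)).trans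
    (LinearEquiv.ofBijective d' hd'bij).symm⟩
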